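/- Fix an integer p ≥ 1. Then the limit as k → ∞ of the sum, over all multi-indices α ∈ ℕ^p with |α| = k, of the reciprocal multinomial coefficients 1/C^k_α = (α_1! ⋯ α_p!)/k! equals p; that is, lim_{k→∞} ∑_{α ∈ ℕ^p, |α| = k} (α_1! ⋯ α_p!)/k! = p. -/

import Mathlib

open Finset

noncomputable def S (p k : ℕ) : ℝ :=
  ∑ α ∈ Finset.Nat.antidiagonalTuple p k,
    (∏ l, ((α l).factorial : ℝ)) / (k.factorial : ℝ)

lemma S_one (k : ℕ) : S 1 k = 1 := by
  simp [S, Finset.Nat.antidiagonalTuple_one,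
    div_self (by exact_mod_cast k.factorial_ne_zero : (k.factorial : ℝ) ≠ 0)]

lemma S_zero_right (p : ℕ) : S p 0 = 1 := by
  simp [S, Finset.Nat.antidiagonalTuple_zero_right]

lemma S_succ (p k : ℕ) : S (p + 1) k =
    ∑ i ∈ Finset.range (k + 1),
      ((i.factorial : ℝ) * ((k - i).factorial : ℝ) / (k.factorial : ℝ)) * S p (k - i) := by
  have key : S (p + 1) k = ∑ ij ∈ (Finset.HasAntidiagonal.antidiagonal k : Finset (ℕ × ℕ)),
      ((ij.1.factorial : ℝ) * (ij.2.factorial : ℝ) / (k.factorial : ℝ)) * S p ij.2 := by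
    have expand : ∀ ij ∈ (Finset.HasAntidiagonal.antidiagonal k : Finset (ℕ × ℕ)),
        ((ij.1.factorial : ℝ) * (ij.2.factorial : ℝ) / (k.factorial : ℝ)) * S p ij.2
        = ∑ y ∈ Finset.Nat.antidiagonalTuple p ij.2,
            (∏ l, (((Fin.cons ij.1 y : Fin (p+1) → ℕ) l).factorial : ℝ)) / (k.factorial : ℝ) := by
      rintro ⟨i, j⟩ hij
      have hj : (j.factorial : ℝ) ≠ 0 := by exact_mod_cast j.factorial_ne_zero
      simp only [S, Finset.mul_sum]
      apply Finset.sum_congr rfl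
      intro y _
      rw [Fin.prod_univ_succ]
      simp only [Fin.cons_zero, Fin.cons_succ]
      field_simp
    rw [Finset.sum_congr rfl expand, Finset.sum_sigma']
    simp only [S]
    symm
    apply Finset.sum_nbij' (i := fun x => Fin.cons x.1.1 x.2)
      (j := fun α => ⟨(α 0, ∑ l, Fin.tail α l), Fin.tail α⟩)
    · rintro ⟨⟨i, j⟩, y⟩ hx
      simp only [Finset.mem_sigma, Finset.HasAntidiagonal.mem_antidiagonal,
        Finset.Nat.mem_antidiagonalTuple] at hx
      rw [Finset.Nat.mem_antidiagonalTuple, Fin.sum_univ_succ]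
      simp only [Fin.cons_zero, Fin.cons_succ]
      rw [hx.2, hx.1]
    · intro α hα
      rw [Finset.Nat.mem_antidiagonalTuple, Fin.sum_univ_succ] at hα
      simp only [Finset.mem_sigma, Finset.HasAntidiagonal.mem_antidiagonal,
        Finset.Nat.mem_antidiagonalTuple]
      exact ⟨hα, trivial⟩
    · rintro ⟨⟨i, j⟩, y⟩ hx
      simp only [Finset.mem_sigma, Finset.HasAntidiagonal.mem_antidiagonal,
        Finset.Nat.mem_antidiagonalTuple] at hx
      simp [Fin.tail_cons, hx.2]
    · intro α hα
      simp [Fin.cons_self_tail]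
    · rintro ⟨⟨i, j⟩, y⟩ hx
      rfl
  rw [key, Finset.Nat.sum_antidiagonal_eq_sum_range_succ_mk]

lemma S_nonneg (p k : ℕ) : 0 ≤ S p k := by
  apply Finset.sum_nonneg
  intro α _
  exact div_nonneg (Finset.prod_nonneg fun l _ => Nat.cast_nonneg _) (Nat.cast_nonneg _)

lemma S_lower (p k : ℕ) (hk : 1 ≤ k) : (p : ℝ) ≤ S p k := by
  classical
  have hsub : (Finset.univ.image fun m : Fin p => Pi.single m k)
      ⊆ Finset.Nat.antidiagonalTuple p k := by
    intro x hx
    simp only [Finset.mem_image] at hx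
    obtain ⟨m, _, rfl⟩ := hx
    rw [Finset.Nat.mem_antidiagonalTuple]
    simp [Finset.sum_pi_single']
  have hterm : ∀ m : Fin p,
      (∏ l, (((Pi.single m k : Fin p → ℕ) l).factorial : ℝ)) / (k.factorial : ℝ) = 1 := by
    intro m
    have : (∏ l, (((Pi.single m k : Fin p → ℕ) l).factorial : ℝ)) = (k.factorial : ℝ) := by
      rw [Finset.prod_eq_single m]
      · simp
      · intro l _ hl
        simp [Pi.single_eq_of_ne hl]
      · simp
    rw [this, div_self (by exact_mod_cast k.factorial_ne_zero)]
  have hinj : Function.Injective (fun m : Fin p => (Pi.single m k : Fin p → ℕ)) := by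
    intro a b hab
    by_contra hne
    have h := congrFun hab a
    simp only [Pi.single_eq_same, Pi.single_eq_of_ne hne] at h
    omega
  calc (p : ℝ) = ∑ x ∈ Finset.univ.image fun m : Fin p => Pi.single m k,
        (∏ l, ((x l).factorial : ℝ)) / (k.factorial : ℝ) := by
        rw [Finset.sum_image (fun a _ b _ h => hinj h)]
        simp [hterm]
    _ ≤ S p k := Finset.sum_le_sum_of_subset_of_nonneg hsub fun x _ _ =>
        div_nonneg (Finset.prod_nonneg fun l _ => Nat.cast_nonneg _) (Nat.cast_nonneg _)

lemma choose_two_le_choose (k i : ℕ) (h2 : 2 ≤ i) (hik : i + 2 ≤ k) :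
    k.choose 2 ≤ k.choose i := by
  have mono : ∀ b : ℕ, 2 ≤ b → b ≤ k / 2 → k.choose 2 ≤ k.choose b := by
    intro b
    induction b with
    | zero => intro h _; exact absurd h (by omega)
    | succ b ih =>
      intro h2b hb
      rcases Nat.lt_or_ge 2 (b+1) with h | h
      · have hb' : b ≤ k / 2 := by omega
        have : k.choose 2 ≤ k.choose b := ih (by omega) hb'
        exact this.trans (Nat.choose_le_succ_of_lt_half_left (by omega))
      · have : b + 1 = 2 := by omega
        rw [this]
  rcases le_or_gt i (k / 2) with h | h
  · exact mono i h2 h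
  · have hik' : i ≤ k := by omega
    rw [← Nat.choose_symm hik']
    exact mono (k - i) (by omega) (by omega)

lemma sum_invchoose (k : ℕ) (hk : 1 ≤ k) :
    ∑ i ∈ Finset.Ioo 0 k, ((k.choose i : ℝ))⁻¹ ≤ 4 / k := by
  classical
  have hk0 : (0 : ℝ) < k := by exact_mod_cast hk
  rcases Nat.lt_or_ge k 2 with hk2 | hk2
  · interval_cases k
    simp
    positivity
  have hk1 : (1 : ℝ) ≤ (k : ℝ) - 1 := by
    have : (2 : ℝ) ≤ k := by exact_mod_cast hk2
    linarith
  set P : ℕ → Prop := fun i => i = 1 ∨ i = k - 1 with hP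
  have hbound : ∀ i ∈ Finset.Ioo 0 k, ((k.choose i : ℝ))⁻¹ ≤
      if P i then ((k : ℝ))⁻¹ else 2 / ((k : ℝ) * ((k : ℝ) - 1)) := by
    intro i hi
    rw [Finset.mem_Ioo] at hi
    by_cases hcase : P i
    · rw [if_pos hcase]
      have : k.choose i = k := by
        rcases hcase with h1 | h1
        · rw [h1, Nat.choose_one_right]
        · rw [h1, Nat.choose_symm hk, Nat.choose_one_right]
      rw [this]
    · rw [if_neg hcase]
      simp only [hP, not_or] at hcase
      have h2i : 2 ≤ i := by omega
      have hik : i + 2 ≤ k := by omega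
      have hle := choose_two_le_choose k i h2i hik
      have hc2 : (k.choose 2 : ℝ) = (k : ℝ) * ((k : ℝ) - 1) / 2 := Nat.cast_choose_two (K := ℝ) k
      have hpos2 : (0 : ℝ) < k.choose 2 := by
        rw [hc2]; positivity
      have hposi : (0 : ℝ) < (k.choose i : ℝ) := by
        exact_mod_cast Nat.choose_pos (by omega)
      have : ((k.choose i : ℝ))⁻¹ ≤ ((k.choose 2 : ℝ))⁻¹ := by
        apply inv_anti₀ hpos2
        exact_mod_cast hle
      refine this.trans ?_
      rw [hc2, inv_div]
  calc ∑ i ∈ Finset.Ioo 0 k, ((k.choose i : ℝ))⁻¹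
      ≤ ∑ i ∈ Finset.Ioo 0 k,
        (if P i then ((k : ℝ))⁻¹ else 2 / ((k : ℝ) * ((k : ℝ) - 1))) :=
        Finset.sum_le_sum hbound
    _ ≤ 4 / k := by
        rw [Finset.sum_ite]
        have hcard1 : ((Finset.Ioo 0 k).filter (fun x => P x)).card ≤ 2 := by
          have : (Finset.Ioo 0 k).filter (fun x => P x) ⊆ {1, k - 1} := by
            intro x hx
            simp only [Finset.mem_filter, hP] at hx
            simp only [Finset.mem_insert, Finset.mem_singleton]
            tauto
          exact (Finset.card_le_card this).trans
            ((Finset.card_insert_le _ _).trans (by simp))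
        have hcard2 : ((Finset.Ioo 0 k).filter (fun x => ¬ P x)).card ≤ k - 1 := by
          calc ((Finset.Ioo 0 k).filter (fun x => ¬ P x)).card
              ≤ (Finset.Ioo 0 k).card := Finset.card_filter_le _ _
            _ = k - 1 := by rw [Nat.card_Ioo]; omega
        rw [Finset.sum_const, Finset.sum_const, nsmul_eq_mul, nsmul_eq_mul]
        have h1 : (((Finset.Ioo 0 k).filter (fun x => P x)).card : ℝ) * ((k : ℝ))⁻¹ ≤ 2 / k := by
          rw [div_eq_mul_inv]
          apply mul_le_mul_of_nonneg_right _ (by positivity)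
          exact_mod_cast hcard1
        have h2 : (((Finset.Ioo 0 k).filter (fun x => ¬ P x)).card : ℝ) *
            (2 / ((k : ℝ) * ((k : ℝ) - 1))) ≤ 2 / k := by
          have hcc : (((Finset.Ioo 0 k).filter (fun x => ¬ P x)).card : ℝ) ≤ (k : ℝ) - 1 := by
            have : (((Finset.Ioo 0 k).filter (fun x => ¬ P x)).card : ℝ) ≤ ((k - 1 : ℕ) : ℝ) := by
              exact_mod_cast hcard2
            refine this.trans ?_
            have : ((k - 1 : ℕ) : ℝ) = (k : ℝ) - 1 := by
              have : 1 ≤ k := hk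
              push_cast [this]
              ring
            rw [this]
          calc (((Finset.Ioo 0 k).filter (fun x => ¬ P x)).card : ℝ) *
              (2 / ((k : ℝ) * ((k : ℝ) - 1)))
              ≤ ((k : ℝ) - 1) * (2 / ((k : ℝ) * ((k : ℝ) - 1))) := by
                apply mul_le_mul_of_nonneg_right hcc (by positivity)
            _ = 2 / k := by
                field_simp
        calc _ ≤ 2 / (k:ℝ) + 2 / (k:ℝ) := add_le_add h1 h2
          _ = 4 / (k:ℝ) := by ring

lemma S_upper (p : ℕ) (hp : 1 ≤ p) :
    ∃ A : ℝ, 0 ≤ A ∧ ∀ k : ℕ, 1 ≤ k → S p k ≤ p + A / k := by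
  induction p, hp using Nat.le_induction with
  | base =>
    refine ⟨0, le_rfl, fun k hk => ?_⟩
    rw [S_one]
    simp
  | succ p hp ih =>
    obtain ⟨A, hA0, hA⟩ := ih
    set B : ℝ := p + A with hB
    have hB0 : 0 ≤ B := by positivity
    have hSB : ∀ j : ℕ, S p j ≤ B := by
      intro j
      rcases Nat.eq_zero_or_pos j with rfl | hj
      · rw [S_zero_right]
        have : (1 : ℝ) ≤ p := by exact_mod_cast hp
        linarith
      · have := hA j hj
        have h2 : A / j ≤ A := by
          apply div_le_self hA0
          exact_mod_cast hj
        linarith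
    refine ⟨A + 4 * B, by positivity, fun k hk => ?_⟩
    have hk0 : (0 : ℝ) < k := by exact_mod_cast hk
    have hkf : (0 : ℝ) < (k.factorial : ℝ) := by exact_mod_cast k.factorial_pos
    rw [S_succ]
    have hsplit : Finset.range (k + 1) = insert 0 (insert k (Finset.Ioo 0 k)) := by
      ext x
      simp only [Finset.mem_range, Finset.mem_insert, Finset.mem_Ioo]
      omega
    have h0notin : (0 : ℕ) ∉ insert k (Finset.Ioo 0 k) := by
      simp only [Finset.mem_insert, Finset.mem_Ioo]
      omega
    have hknotin : k ∉ Finset.Ioo 0 k := by simp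
    rw [hsplit, Finset.sum_insert h0notin, Finset.sum_insert hknotin]
    have hg0 : ((Nat.factorial 0 : ℝ) * ((k - 0).factorial : ℝ) / (k.factorial : ℝ)) * S p (k - 0)
        ≤ (p : ℝ) + A / k := by
      simp only [Nat.factorial_zero, Nat.sub_zero, Nat.cast_one, one_mul,
        div_self (ne_of_gt hkf), one_mul]
      exact hA k hk
    have hgk : ((k.factorial : ℝ) * ((k - k).factorial : ℝ) / (k.factorial : ℝ)) * S p (k - k)
        = 1 := by
      simp only [Nat.sub_self, Nat.factorial_zero, Nat.cast_one, mul_one,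
        div_self (ne_of_gt hkf), one_mul, S_zero_right]
    have hmid : ∑ i ∈ Finset.Ioo 0 k,
        ((i.factorial : ℝ) * ((k - i).factorial : ℝ) / (k.factorial : ℝ)) * S p (k - i)
        ≤ 4 * B / k := by
      have step : ∀ i ∈ Finset.Ioo 0 k,
          ((i.factorial : ℝ) * ((k - i).factorial : ℝ) / (k.factorial : ℝ)) * S p (k - i)
          ≤ B * ((k.choose i : ℝ))⁻¹ := by
        intro i hi
        rw [Finset.mem_Ioo] at hi
        have hik : i ≤ k := le_of_lt hi.2
        have hfact : (i.factorial : ℝ) * ((k - i).factorial : ℝ) / (k.factorial : ℝ)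
            = ((k.choose i : ℝ))⁻¹ := by
          have := Nat.choose_mul_factorial_mul_factorial hik
          have hcast : (k.choose i : ℝ) * (i.factorial : ℝ) * ((k - i).factorial : ℝ)
              = (k.factorial : ℝ) := by exact_mod_cast this
          have hc0 : (0 : ℝ) < (k.choose i : ℝ) := by
            exact_mod_cast Nat.choose_pos hik
          field_simp
          linarith [hcast]
        rw [hfact]
        have hinv0 : (0 : ℝ) ≤ ((k.choose i : ℝ))⁻¹ := by positivity
        calc ((k.choose i : ℝ))⁻¹ * S p (k - i) ≤ ((k.choose i : ℝ))⁻¹ * B :=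
              mul_le_mul_of_nonneg_left (hSB _) hinv0
          _ = B * ((k.choose i : ℝ))⁻¹ := mul_comm _ _
      calc ∑ i ∈ Finset.Ioo 0 k,
            ((i.factorial : ℝ) * ((k - i).factorial : ℝ) / (k.factorial : ℝ)) * S p (k - i)
          ≤ ∑ i ∈ Finset.Ioo 0 k, B * ((k.choose i : ℝ))⁻¹ := Finset.sum_le_sum step
        _ = B * ∑ i ∈ Finset.Ioo 0 k, ((k.choose i : ℝ))⁻¹ := by rw [Finset.mul_sum]
        _ ≤ B * (4 / k) := mul_le_mul_of_nonneg_left (sum_invchoose k hk) hB0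
        _ = 4 * B / k := by ring
    have : ((p : ℝ) + A / k) + 1 + 4 * B / k = ((p + 1 : ℕ) : ℝ) + (A + 4 * B) / k := by
      push_cast
      field_simp
      ring
    linarith [hg0, hgk, hmid]

/-- **Limit of reciprocal multinomial coefficients.**
For fixed `p ≥ 1`, `lim_{k→∞} ∑_{α ∈ ℕ^p, |α| = k} 1/C^k_α = p`, where
`C^k_α = k!/(α₁!⋯α_p!)` is the multinomial coefficient. -/
theorem recip_multinomial_sum_limit (p : ℕ) (hp : 1 ≤ p) :
    Filter.Tendsto
      (fun k : ℕ =>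
        ∑ α ∈ Finset.Nat.antidiagonalTuple p k,
          (∏ l, ((α l).factorial : ℝ)) / (k.factorial : ℝ))
      Filter.atTop (nhds (p : ℝ)) := by
  obtain ⟨A, hA0, hA⟩ := S_upper p hp
  have hupper : Filter.Tendsto (fun k : ℕ => (p : ℝ) + A / k) Filter.atTop (nhds (p : ℝ)) := by
    have : Filter.Tendsto (fun k : ℕ => A / (k : ℝ)) Filter.atTop (nhds 0) :=
      Filter.Tendsto.div_atTop tendsto_const_nhds tendsto_natCast_atTop_atTop
    simpa using tendsto_const_nhds.add this
  apply tendsto_of_tendsto_of_tendsto_of_le_of_le' tendsto_const_nhds hupper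
  · filter_upwards [Filter.eventually_ge_atTop 1] with k hk
    exact S_lower p k hk
  · filter_upwards [Filter.eventually_ge_atTop 1] with k hk
    exact hA k hk
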